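/- For all integers n \ge 2, p_{n-2} q_n - p_n q_{n-2} = 2n \, \mathfrak{d}_{n-1} + \frac{n-2}{n} q_{n-2}, where \mathfrak{d}_m = p_{m-1} q_m - p_m q_{m-1}, q_n = \sum_{k=0}^n \binom{n}{k}^2 k!, and p_n = \sum_{k=0}^n \binom{n}{k}^2 k! (2 H_{n-k} - H_k). -/

import Mathlib

open Finset

noncomputable def H (m : ℕ) : ℚ := ∑ j ∈ Finset.range m, (1 : ℚ) / (j + 1)

noncomputable def q (n : ℕ) : ℚ :=
  ∑ k ∈ Finset.range (n + 1), ((n.choose k : ℚ))^2 * (Nat.factorial k : ℚ)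

noncomputable def p (n : ℕ) : ℚ :=
  ∑ k ∈ Finset.range (n + 1),
    ((n.choose k : ℚ))^2 * (Nat.factorial k : ℚ) * (2 * H (n - k) - H k)

/-- `dd n = p_{n-1} q_n - p_n q_{n-1}`, with the conventions `p_{-1} = 1`, `q_{-1} = 0`,
so `dd 0 = 1`. -/
noncomputable def dd : ℕ → ℚ
  | 0 => 1
  | (n + 1) => p n * q (n + 1) - p (n + 1) * q n

noncomputable def fq (n j : ℕ) : ℚ := (n.choose j : ℚ) * (n.factorial : ℚ) / (j.factorial : ℚ)

noncomputable def Gq (n j : ℕ) : ℚ :=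
  -((n:ℚ)+1)^2 * (j:ℚ)^2 * ((n.factorial : ℚ))^2 / (((j.factorial : ℚ))^2 * ((n + 2 - j).factorial : ℚ))

lemma fact_ne (m : ℕ) : ((m.factorial : ℚ)) ≠ 0 := by exact_mod_cast m.factorial_ne_zero

lemma cast_fact_succ (m : ℕ) : (((m+1).factorial : ℚ)) = ((m:ℚ)+1) * (m.factorial : ℚ) := by
  rw [Nat.factorial_succ]; push_cast; ring

lemma fq_eq (n j : ℕ) (h : j ≤ n) :
    fq n j = ((n.factorial : ℚ))^2 / (((j.factorial : ℚ))^2 * ((n - j).factorial : ℚ)) := by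
  rw [fq, Nat.cast_choose ℚ h]; field_simp

lemma fq_zero (n j : ℕ) (h : n < j) : fq n j = 0 := by
  rw [fq, Nat.choose_eq_zero_of_lt h]; simp

lemma fq_self (n : ℕ) : fq n n = 1 := by
  rw [fq, Nat.choose_self]; field_simp; norm_num

lemma fq_succ (n : ℕ) : fq (n+1) n = ((n:ℚ)+1)^2 := by
  rw [fq, Nat.choose_succ_self_right, cast_fact_succ]
  push_cast
  field_simp [fact_ne]

lemma Gq_zero (n : ℕ) : Gq n 0 = 0 := by simp [Gq]

lemma Gq_top (n : ℕ) : Gq n (n+1) = -((n:ℚ)+1)^2 := by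
  rw [Gq, show n + 2 - (n+1) = 1 from by omega, cast_fact_succ n]
  have h1 := fact_ne n
  have h4 : ((n:ℚ)+1) ≠ 0 := by positivity
  simp only [Nat.factorial_one, Nat.cast_one]
  push_cast
  field_simp

lemma q_flip (n : ℕ) : q n = ∑ j ∈ Finset.range (n + 1), fq n j := by
  rw [q, ← Finset.sum_range_reflect]
  refine Finset.sum_congr rfl ?_
  intro j hj
  simp only [Finset.mem_range] at hj
  have hj' : j ≤ n := by omega
  have h1 : n + 1 - 1 - j = n - j := by omega
  rw [h1, fq, Nat.choose_symm hj', Nat.cast_choose ℚ hj']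
  field_simp

lemma p_flip (n : ℕ) :
    p n = ∑ j ∈ Finset.range (n + 1), fq n j * (2 * H j - H (n - j)) := by
  rw [p, ← Finset.sum_range_reflect]
  refine Finset.sum_congr rfl ?_
  intro j hj
  simp only [Finset.mem_range] at hj
  have hj' : j ≤ n := by omega
  have h1 : n + 1 - 1 - j = n - j := by omega
  have h2 : n - (n - j) = j := by omega
  rw [h1, h2, fq, Nat.choose_symm hj', Nat.cast_choose ℚ hj']
  field_simp

lemma sum_ext (N m : ℕ) (h : m < N) (g : ℕ → ℚ) :
    ∑ j ∈ Finset.range N, fq m j * g j = ∑ j ∈ Finset.range (m+1), fq m j * g j := by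
  symm
  apply Finset.sum_subset
  · exact Finset.range_subset_range.2 (by omega)
  · intro x _ hx
    simp only [Finset.mem_range, not_lt] at hx
    rw [fq_zero m x (by omega), zero_mul]

lemma qterm (n j : ℕ) (h : j ≤ n) :
    fq (n+2) j - 2*((n:ℚ)+2) * fq (n+1) j + ((n:ℚ)+1)^2 * fq n j
      = Gq n (j+1) - Gq n j := by
  obtain ⟨d, rfl⟩ := Nat.exists_eq_add_of_le h
  rw [fq_eq _ _ (by omega), fq_eq _ _ (by omega), fq_eq _ _ (by omega), Gq, Gq]
  rw [show j + d + 2 - j = d + 2 from by omega, show j + d + 1 - j = d + 1 from by omega,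
      show j + d - j = d from by omega, show j + d + 2 - (j + 1) = d + 1 from by omega]
  rw [show j + d + 2 = (j + d + 1) + 1 from rfl, cast_fact_succ (j+d+1), cast_fact_succ (j+d),
      show d + 2 = (d + 1) + 1 from rfl, cast_fact_succ (d+1), cast_fact_succ d,
      cast_fact_succ j]
  have h1 := fact_ne j
  have h2 := fact_ne d
  have h3 := fact_ne (j + d)
  have h4 : ((j:ℚ)+1) ≠ 0 := by positivity
  have h5 : ((d:ℚ)+1) ≠ 0 := by positivity
  have h6 : ((d:ℚ)+2) ≠ 0 := by positivity
  push_cast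
  field_simp
  ring

lemma q_ext (N m : ℕ) (h : m < N) : q m = ∑ j ∈ Finset.range N, fq m j := by
  rw [q_flip]
  apply Finset.sum_subset
  · exact Finset.range_subset_range.2 (by omega)
  · intro x _ hx
    simp only [Finset.mem_range, not_lt] at hx
    exact fq_zero m x (by omega)

lemma qrec (n : ℕ) :
    q (n+2) - 2*((n:ℚ)+2) * q (n+1) + ((n:ℚ)+1)^2 * q n = 0 := by
  rw [q_ext (n+3) (n+2) (by omega), q_ext (n+3) (n+1) (by omega), q_ext (n+3) n (by omega)]
  rw [Finset.mul_sum, Finset.mul_sum, ← Finset.sum_sub_distrib, ← Finset.sum_add_distrib]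
  rw [show n + 3 = (n+2) + 1 from rfl, Finset.sum_range_succ,
      show n + 2 = (n+1) + 1 from rfl, Finset.sum_range_succ]
  have hmain : ∑ j ∈ Finset.range (n+1),
      (fq (n+2) j - 2*((n:ℚ)+2) * fq (n+1) j + ((n:ℚ)+1)^2 * fq n j)
      = Gq n (n+1) - Gq n 0 := by
    rw [← Finset.sum_range_sub (fun j => Gq n j)]
    refine Finset.sum_congr rfl ?_
    intro j hj
    simp only [Finset.mem_range] at hj
    exact qterm n j (by omega)
  rw [hmain, Gq_zero, Gq_top]
  rw [fq_zero n (n+1) (by omega), fq_self (n+1), show n+1+1 = (n+1)+1 from rfl, fq_succ (n+1),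
      fq_zero n (n+2) (by omega), fq_zero (n+1) (n+2) (by omega), fq_self (n+2)]
  push_cast
  ring

noncomputable def Gp (n j : ℕ) : ℚ :=
  ((n:ℚ)+1)^2 * (j:ℚ) * (2 - (j:ℚ) * (2 * H j - H (n + 2 - j))) * ((n.factorial : ℚ))^2
    / (((j.factorial : ℚ))^2 * ((n + 2 - j).factorial : ℚ))

lemma H_zero : H 0 = 0 := by simp [H]

lemma H_succ (m : ℕ) : H (m+1) = H m + 1/((m:ℚ)+1) := by
  rw [H, Finset.sum_range_succ, H]

lemma H_one : H 1 = 1 := by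
  rw [show (1:ℕ) = 0 + 1 from rfl, H_succ, H_zero]; norm_num

lemma Gp_zero (n : ℕ) : Gp n 0 = 0 := by simp [Gp]

lemma Gp_top (n : ℕ) : Gp n (n+1) = ((n:ℚ)+1) * (2 - ((n:ℚ)+1)*(2*H (n+1) - 1)) := by
  rw [Gp, show n + 2 - (n+1) = 1 from by omega, H_one, cast_fact_succ n]
  have h1 := fact_ne n
  have h4 : ((n:ℚ)+1) ≠ 0 := by positivity
  simp only [Nat.factorial_one, Nat.cast_one]
  push_cast
  field_simp

lemma pterm (n j : ℕ) (h : j ≤ n) :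
    fq (n+2) j * (2*H j - H (n+2-j)) - 2*((n:ℚ)+2) * (fq (n+1) j * (2*H j - H (n+1-j)))
      + ((n:ℚ)+1)^2 * (fq n j * (2*H j - H (n-j)))
      = Gp n (j+1) - Gp n j := by
  obtain ⟨d, rfl⟩ := Nat.exists_eq_add_of_le h
  rw [fq_eq _ _ (by omega), fq_eq _ _ (by omega), fq_eq _ _ (by omega), Gp, Gp]
  rw [show j + d + 2 - j = d + 2 from by omega, show j + d + 1 - j = d + 1 from by omega,
      show j + d - j = d from by omega, show j + d + 2 - (j + 1) = d + 1 from by omega]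
  rw [show d + 2 = (d + 1) + 1 from rfl, H_succ (d+1), H_succ d, H_succ j]
  rw [show j + d + 2 = (j + d + 1) + 1 from rfl, cast_fact_succ (j+d+1), cast_fact_succ (j+d),
      cast_fact_succ (d+1), cast_fact_succ d, cast_fact_succ j]
  have h1 := fact_ne j
  have h2 := fact_ne d
  have h3 := fact_ne (j + d)
  have h4 : ((j:ℚ)+1) ≠ 0 := by positivity
  have h5 : ((d:ℚ)+1) ≠ 0 := by positivity
  have h6 : ((d:ℚ)+2) ≠ 0 := by positivity
  push_cast
  field_simp
  ring

lemma p_ext (N m : ℕ) (h : m < N) :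
    p m = ∑ j ∈ Finset.range N, fq m j * (2 * H j - H (m - j)) := by
  rw [p_flip]
  apply Finset.sum_subset
  · exact Finset.range_subset_range.2 (by omega)
  · intro x _ hx
    simp only [Finset.mem_range, not_lt] at hx
    rw [fq_zero m x (by omega), zero_mul]

lemma prec (n : ℕ) :
    p (n+2) - 2*((n:ℚ)+2) * p (n+1) + ((n:ℚ)+1)^2 * p n = -(n:ℚ)/((n:ℚ)+2) := by
  rw [p_ext (n+3) (n+2) (by omega), p_ext (n+3) (n+1) (by omega), p_ext (n+3) n (by omega)]
  rw [Finset.mul_sum, Finset.mul_sum, ← Finset.sum_sub_distrib, ← Finset.sum_add_distrib]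
  rw [show n + 3 = (n+2) + 1 from rfl, Finset.sum_range_succ,
      show n + 2 = (n+1) + 1 from rfl, Finset.sum_range_succ]
  have hmain : ∑ j ∈ Finset.range (n+1),
      (fq (n+2) j * (2*H j - H (n+2-j)) - 2*((n:ℚ)+2) * (fq (n+1) j * (2*H j - H (n+1-j)))
        + ((n:ℚ)+1)^2 * (fq n j * (2*H j - H (n-j))))
      = Gp n (n+1) - Gp n 0 := by
    rw [← Finset.sum_range_sub (fun j => Gp n j)]
    refine Finset.sum_congr rfl ?_
    intro j hj
    simp only [Finset.mem_range] at hj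
    exact pterm n j (by omega)
  rw [hmain, Gp_zero, Gp_top]
  rw [fq_zero n (n+1) (by omega), fq_self (n+1), show n+1+1 = (n+1)+1 from rfl, fq_succ (n+1),
      fq_zero n (n+2) (by omega), fq_zero (n+1) (n+2) (by omega), fq_self (n+2)]
  rw [show n+1+1 - (n+1) = 1 from by omega, show n+1 - (n+1) = 0 from by omega,
      show n+1+1 - (n+1+1) = 0 from by omega, H_one, H_zero]
  rw [show ((n:ℕ)+1+1 : ℕ) = (n+1) + 1 from rfl, H_succ (n+1)]
  have h4 : ((n:ℚ)+2) ≠ 0 := by positivity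
  push_cast
  field_simp
  ring

theorem pq_cross_identity (n : ℕ) (hn : 2 ≤ n) :
    p (n - 2) * q n - p n * q (n - 2)
      = 2 * (n : ℚ) * dd (n - 1) + ((n : ℚ) - 2) / (n : ℚ) * q (n - 2) := by
  obtain ⟨m, rfl⟩ : ∃ m, n = m + 2 := ⟨n - 2, by omega⟩
  rw [show m + 2 - 2 = m from by omega, show m + 2 - 1 = m + 1 from by omega]
  have hq := qrec m
  have hp := prec m
  have hd : dd (m+1) = p m * q (m+1) - p (m+1) * q m := rfl
  rw [hd]
  have h2 : ((m:ℚ)+2) ≠ 0 := by positivity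
  have hq' : q (m+2) = 2*((m:ℚ)+2)*q (m+1) - ((m:ℚ)+1)^2 * q m := by linarith
  have hp' : p (m+2) = 2*((m:ℚ)+2)*p (m+1) - ((m:ℚ)+1)^2 * p m - (m:ℚ)/((m:ℚ)+2) := by
    linear_combination hp
  rw [hq', hp']
  push_cast
  field_simp
  ring
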